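/- There exists a unique ℤ-linear endomorphism δ of the group algebra ℤ[M] such that (1 − e^{−α})·δ(u) = u − e^{−α}·s(u) for every u ∈ ℤ[M]. (This δ is Demazure's isobaric divided difference operator δ_α; uniqueness uses that ℤ[M] is an integral domain and 1 − e^{−α} ≠ 0.) -/

import Mathlib

open AddMonoidAlgebra

noncomputable section

/-- The reflection `λ ↦ λ - c(λ) • α` associated to a root `α` and coroot `c`,
as an additive homomorphism of the weight lattice `M`. -/
def demazureReflection {M : Type*} [AddCommGroup M] (α : M) (c : M →+ ℤ) : M →+ M where
  toFun := fun lam => lam - c lam • α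
  map_zero' := by simp
  map_add' := fun x y => by simp only [map_add, add_smul]; abel

/-- The ring endomorphism of the group algebra `ℤ[M]` induced by the reflection
`s(λ) = λ - c(λ)·α`; it sends `e^λ` to `e^{s(λ)}`. -/
def demazureReflectionAlg {M : Type*} [AddCommGroup M] (α : M) (c : M →+ ℤ) :
    AddMonoidAlgebra ℤ M →+* AddMonoidAlgebra ℤ M :=
  mapDomainRingHom ℤ (demazureReflection α c)

private lemma demazure_dvd_aux {M : Type*} [AddCommGroup M] (α : M) :
    ∀ m : ℤ, (1 - single (-α) 1 : AddMonoidAlgebra ℤ M) ∣ (1 - single (m • α) 1) := by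
  have key : ∀ β : M, (1 - single (-α) 1 : AddMonoidAlgebra ℤ M) ∣ (1 - single β 1) →
      (1 - single (-α) 1 : AddMonoidAlgebra ℤ M) ∣ (1 - single (β - α) 1) := by
    intro β hβ
    have : (1 - single (β - α) 1 : AddMonoidAlgebra ℤ M)
        = (1 - single β 1) + single β 1 * (1 - single (-α) 1) := by
      rw [mul_sub, mul_one, single_mul_single, mul_one, sub_eq_add_neg β α]
      ring
    rw [this]
    exact dvd_add hβ (Dvd.dvd.mul_left dvd_rfl _)
  have key' : ∀ β : M, (1 - single (-α) 1 : AddMonoidAlgebra ℤ M) ∣ (1 - single β 1) →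
      (1 - single (-α) 1 : AddMonoidAlgebra ℤ M) ∣ (1 - single (β + α) 1) := by
    intro β hβ
    have hα' : (1 - single (-α) 1 : AddMonoidAlgebra ℤ M) ∣ (1 - single α 1) := by
      refine ⟨-single α 1, ?_⟩
      rw [mul_neg, sub_mul, one_mul, single_mul_single, mul_one, neg_add_cancel,
        ← one_def, neg_sub]
    have : (1 - single (β + α) 1 : AddMonoidAlgebra ℤ M)
        = (1 - single β 1) + single β 1 * (1 - single α 1) := by
      rw [mul_sub, mul_one, single_mul_single, mul_one]
      ring
    rw [this]
    exact dvd_add hβ (Dvd.dvd.mul_left hα' _)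
  intro m
  induction m using Int.induction_on with
  | zero => simp [one_def]
  | succ n ih =>
      have := key' _ ih
      rwa [show (n : ℤ) • α + α = ((n : ℤ) + 1) • α by rw [add_smul, one_smul]] at this
  | pred n ih =>
      have := key _ ih
      rwa [show (-(n : ℤ)) • α - α = (-(n : ℤ) - 1) • α by rw [sub_smul, one_smul]] at this

/-- There is a unique ℤ-linear endomorphism δ of ℤ[M] with
`(1 - e^{-α}) * δ(u) = u - e^{-α} * s(u)` for all u. -/
theorem demazure_exists_unique {M : Type*} [AddCommGroup M]
    [Module.Free ℤ M] [Module.Finite ℤ M]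
    (α : M) (hα : α ≠ 0) (c : M →+ ℤ) (hc : c α = 2) :
    ∃! δ : AddMonoidAlgebra ℤ M →ₗ[ℤ] AddMonoidAlgebra ℤ M,
      ∀ u : AddMonoidAlgebra ℤ M,
        (1 - single (-α) 1) * δ u = u - single (-α) 1 * demazureReflectionAlg α c u := by
  classical
  set e : AddMonoidAlgebra ℤ M := single (-α) 1 with he
  -- the group algebra is a domain
  have b := Module.Free.chooseBasis ℤ M
  haveI : UniqueSums M :=
    UniqueSums.of_injective_addHom b.repr.toAddMonoidHom (by exact b.repr.injective) inferInstance
  have hne : (1 - e : AddMonoidAlgebra ℤ M) ≠ 0 := by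
    rw [sub_ne_zero, one_def]
    intro h
    rcases (AddMonoidAlgebra.single_inj).mp h with ⟨h1, -⟩ | ⟨h1, -⟩
    · exact hα (by simpa using h1.symm)
    · exact one_ne_zero h1
  -- value of the reflection on singles
  have hs : ∀ lam : M, demazureReflectionAlg α c (single lam 1)
      = single (lam - c lam • α) 1 := by
    intro lam
    simp [demazureReflectionAlg, demazureReflection, mapDomainRingHom,
      Finsupp.mapDomain_single]
  -- divisibility on basis elements
  have hdvd : ∀ lam : M, (1 - e) ∣
      (single lam 1 - e * demazureReflectionAlg α c (single lam 1)) := by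
    intro lam
    rw [hs, he, single_mul_single, one_mul]
    have : single lam (1 : ℤ) - single (-α + (lam - c lam • α)) 1
        = single lam 1 * (1 - single ((-(c lam + 1)) • α) 1) := by
      rw [mul_sub, mul_one, single_mul_single, mul_one]
      congr 2
      rw [neg_smul, add_smul, one_smul]
      abel
    rw [this]
    exact Dvd.dvd.mul_left (demazure_dvd_aux α _) _
  choose d hd using hdvd
  -- build δ
  set δ : AddMonoidAlgebra ℤ M →ₗ[ℤ] AddMonoidAlgebra ℤ M :=
    Finsupp.lsum ℤ (fun lam => LinearMap.toSpanSingleton ℤ _ (d lam)) ∘ₗ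
      (AddMonoidAlgebra.coeffLinearEquiv ℤ).toLinearMap with hδ
  have hδs : ∀ (lam : M) (k : ℤ), δ (single lam k) = k • d lam := by
    intro lam k
    rw [hδ]
    exact Finsupp.lsum_single (S := ℤ) (fun lam => LinearMap.toSpanSingleton ℤ _ (d lam)) lam k
  have hmain : ∀ u : AddMonoidAlgebra ℤ M,
      (1 - e) * δ u = u - e * demazureReflectionAlg α c u := by
    intro u
    induction u using AddMonoidAlgebra.induction_linear with
    | zero => simp
    | add f g hf hg =>
        simp only [map_add, mul_add] at *
        rw [hf, hg]
        ring
    | single a k =>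
        rw [hδs]
        have hsk : (single a k : AddMonoidAlgebra ℤ M) = k • single a 1 := by
          rw [AddMonoidAlgebra.smul_single, smul_eq_mul, mul_one]
        rw [hsk, map_zsmul, mul_smul_comm, mul_smul_comm, ← smul_sub, ← hd a]
  refine ⟨δ, hmain, ?_⟩
  intro δ' hδ'
  refine LinearMap.ext fun u => ?_
  have : (1 - e) * (δ' u - δ u) = 0 := by
    rw [mul_sub, hδ' u, hmain u, sub_self]
  rcases mul_eq_zero.mp this with h | h
  · exact absurd h hne
  · exact sub_eq_zero.mp h
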